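/- Let m > 0 and A ∈ C_c^∞(ℝ⁴,ℝ⁴). Let τ : ℝ⁴ → ℝ, v : ℝ⁴ × ℝ → (0,∞) and n = (n⁰, n⃗) : ℝ⁴ × ℝ → ℝ⁴ be smooth with (n_t(x)⁰)² − |n⃗_t(x)|² = 1 for all (x,t), and assume ∂τ/∂x⁰(x) = n_{τ(x)}(x)⁰ / v_{τ(x)}(x) and ∂τ/∂xᵏ(x) = −n_{τ(x)}(x)ᵏ / v_{τ(x)}(x) for k = 1,2,3 and all x ∈ ℝ⁴. Let φ : ℝ⁴ × ℝ → ℂ⁴ be smooth such that for every t the function x ↦ φ(x,t) solves the free Dirac equation i∑_μ γ^μ ∂φ/∂x^μ(x,t) = m φ(x,t), and set ψ(x) := φ(x, τ(x)). Then for every x ∈ ℝ⁴ the following are equivalent: (a) ψ satisfies the Dirac equation with potential A at x; (b) i ∂φ/∂t(x,t)|_{t=τ(x)} = v_{τ(x)}(x) · n̸_{τ(x)}(x) · A̸(x) · φ(x, τ(x)), where A̸(x) = ∑_{μ=0}^{3} γ^μ A_μ(x) and n̸ denotes the Feynman slash of the four-vector (n⁰, n⃗). -/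

import Mathlib

open Matrix MeasureTheory
open scoped BigOperators Pointwise ComplexOrder ENNReal NNReal

noncomputable section

/-- The Dirac gamma matrix `γ⁰` in the standard representation. -/
def γ0 : Matrix (Fin 4) (Fin 4) ℂ :=
  !![1, 0, 0, 0; 0, 1, 0, 0; 0, 0, -1, 0; 0, 0, 0, -1]

/-- The Dirac gamma matrix `γ¹`. -/
def γ1 : Matrix (Fin 4) (Fin 4) ℂ :=
  !![0, 0, 0, 1; 0, 0, 1, 0; 0, -1, 0, 0; -1, 0, 0, 0]

/-- The Dirac gamma matrix `γ²`. -/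
def γ2 : Matrix (Fin 4) (Fin 4) ℂ :=
  !![0, 0, 0, -Complex.I; 0, 0, Complex.I, 0; 0, Complex.I, 0, 0; -Complex.I, 0, 0, 0]

/-- The Dirac gamma matrix `γ³`. -/
def γ3 : Matrix (Fin 4) (Fin 4) ℂ :=
  !![0, 0, 1, 0; 0, 0, 0, -1; -1, 0, 0, 0; 0, 1, 0, 0]

/-- The family `μ ↦ γ^μ`. -/
def gam : Fin 4 → Matrix (Fin 4) (Fin 4) ℂ := ![γ0, γ1, γ2, γ3]

/-- Feynman slash of a four-vector (with upper indices):
`p̸ = p⁰γ⁰ - p¹γ¹ - p²γ² - p³γ³`. -/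
def slash (p : Fin 4 → ℂ) : Matrix (Fin 4) (Fin 4) ℂ :=
  p 0 • γ0 - p 1 • γ1 - p 2 • γ2 - p 3 • γ3

/-- Slash of a covector (lower indices): `A̸ = ∑ μ, A_μ γ^μ`. -/
def slashLow (a : Fin 4 → ℂ) : Matrix (Fin 4) (Fin 4) ℂ := ∑ μ, a μ • gam μ

/-- Complexification of a real four-vector. -/
def cv4 (p : Fin 4 → ℝ) : Fin 4 → ℂ := fun μ => (p μ : ℂ)

/-- The Dirac equation `i ∑ μ, γ^μ ∂_μ ψ = (m + ∑ μ, γ^μ A_μ) ψ` at a point `x`. -/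
def DiracEqAt (m : ℝ) (A : (Fin 4 → ℝ) → Fin 4 → ℝ)
    (ψ : (Fin 4 → ℝ) → Fin 4 → ℂ) (x : Fin 4 → ℝ) : Prop :=
  Complex.I • ∑ μ, gam μ *ᵥ fderiv ℝ ψ x (Pi.single μ 1) =
    (m : ℂ) • ψ x + slashLow (cv4 (A x)) *ᵥ ψ x

/-- The Dirac equation with external potential `A` (everywhere on `ℝ⁴`). -/
def DiracEq (m : ℝ) (A : (Fin 4 → ℝ) → Fin 4 → ℝ)
    (ψ : (Fin 4 → ℝ) → Fin 4 → ℂ) : Prop := ∀ x, DiracEqAt m A ψ x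


lemma rsmul_eq (r : ℝ) (w : Fin 4 → ℂ) : r • w = (r : ℂ) • w := by
  ext i; simp [Complex.real_smul]

set_option maxHeartbeats 1000000 in
lemma slash_sq (p : Fin 4 → ℂ) :
    slash p * slash p = (p 0 ^ 2 - (p 1 ^ 2 + p 2 ^ 2 + p 3 ^ 2)) • 1 := by
  unfold slash γ0 γ1 γ2 γ3
  ext i j
  fin_cases i <;> fin_cases j <;>
    · simp [Matrix.mul_apply, Fin.sum_univ_four, Matrix.one_apply]
      try ring_nf
      try simp [Complex.I_sq]
      try ring_nf
/-- Equivalence of the Schrödinger picture and the interaction picture on a foliation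
of space-time by Cauchy surfaces: `ψ(x) = φ(x, τ(x))` satisfies the Dirac equation
with potential `A` at `x` if and only if `i ∂ₜφ(x,t)|_{t=τ(x)} = v n̸ A̸ φ(x,τ(x))`. -/
theorem schroedinger_interaction_equivalence (m : ℝ) (hm : 0 < m)
    (A : (Fin 4 → ℝ) → Fin 4 → ℝ)
    (hA : ContDiff ℝ (⊤ : ℕ∞) A) (hAc : HasCompactSupport A)
    (τ : (Fin 4 → ℝ) → ℝ) (hτ : ContDiff ℝ (⊤ : ℕ∞) τ)
    (v : (Fin 4 → ℝ) → ℝ → ℝ)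
    (hv : ContDiff ℝ (⊤ : ℕ∞) (fun q : (Fin 4 → ℝ) × ℝ => v q.1 q.2))
    (hvpos : ∀ x t, 0 < v x t)
    (nn : (Fin 4 → ℝ) → ℝ → Fin 4 → ℝ)
    (hnn : ContDiff ℝ (⊤ : ℕ∞) (fun q : (Fin 4 → ℝ) × ℝ => nn q.1 q.2))
    (hnorm : ∀ x t, (nn x t 0) ^ 2 - ((nn x t 1) ^ 2 + (nn x t 2) ^ 2 + (nn x t 3) ^ 2) = 1)
    (hτ0 : ∀ x, fderiv ℝ τ x (Pi.single 0 1) = nn x (τ x) 0 / v x (τ x))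
    (hτk : ∀ x, ∀ k : Fin 3,
      fderiv ℝ τ x (Pi.single k.succ 1) = -(nn x (τ x) k.succ) / v x (τ x))
    (φ : (Fin 4 → ℝ) × ℝ → Fin 4 → ℂ) (hφ : ContDiff ℝ (⊤ : ℕ∞) φ)
    (hfree : ∀ t x, Complex.I • ∑ μ, gam μ *ᵥ fderiv ℝ (fun y => φ (y, t)) x (Pi.single μ 1)
      = (m : ℂ) • φ (x, t))
    (x : Fin 4 → ℝ) :
    DiracEqAt m A (fun y => φ (y, τ y)) x ↔
      Complex.I • deriv (fun t => φ (x, t)) (τ x) =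
        v x (τ x) •
          ((slash (cv4 (nn x (τ x))) * slashLow (cv4 (A x))) *ᵥ φ (x, τ x)) := by

  classical
  have hφdiff : Differentiable ℝ φ := hφ.differentiable (by simp)
  set Dφ := fderiv ℝ φ (x, τ x) with hDφdef
  have hDφ' : HasFDerivAt φ Dφ (x, τ x) := (hφdiff (x, τ x)).hasFDerivAt
  have hτd : HasFDerivAt τ (fderiv ℝ τ x) x :=
    ((hτ.differentiable (by simp)) x).hasFDerivAt
  have hψ : HasFDerivAt (fun y => φ (y, τ y))
      (Dφ.comp ((ContinuousLinearMap.id ℝ (Fin 4 → ℝ)).prod (fderiv ℝ τ x))) x :=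
    hDφ'.comp x (HasFDerivAt.prodMk (hasFDerivAt_id x) hτd)
  have hfd : ∀ w, fderiv ℝ (fun y => φ (y, τ y)) x w = Dφ (w, fderiv ℝ τ x w) := by
    intro w; rw [hψ.fderiv]; rfl
  have hslice : ∀ w, fderiv ℝ (fun y => φ (y, τ x)) x w = Dφ (w, 0) := by
    intro w
    have h : HasFDerivAt (fun y => φ (y, τ x))
        (Dφ.comp ((ContinuousLinearMap.id ℝ (Fin 4 → ℝ)).prod 0)) x :=
      hDφ'.comp x (HasFDerivAt.prodMk (hasFDerivAt_id x) (hasFDerivAt_const (τ x) x))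
    rw [h.fderiv]; rfl
  have hD : HasDerivAt (fun s => φ (x, s)) (Dφ (0, 1)) (τ x) := by
    have h1 : HasDerivAt (fun s : ℝ => ((x : Fin 4 → ℝ), s)) (0, 1) (τ x) :=
      HasDerivAt.prodMk (hasDerivAt_const (τ x) x) (hasDerivAt_id (τ x))
    exact hDφ'.comp_hasDerivAt (τ x) h1
  have hderiv : deriv (fun s => φ (x, s)) (τ x) = Dφ (0, 1) := hD.deriv
  set D := Dφ (0, 1) with hDdef
  have hVne : ((v x (τ x) : ℝ) : ℂ) ≠ 0 := by
    exact_mod_cast (hvpos x (τ x)).ne'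
  set S := slash (cv4 (nn x (τ x))) with hSdef
  set AA := slashLow (cv4 (A x)) with hAAdef
  have hSS : S * S = 1 := by
    rw [hSdef, slash_sq]
    have h := hnorm x (τ x)
    have h2 : (cv4 (nn x (τ x)) 0) ^ 2 - ((cv4 (nn x (τ x)) 1) ^ 2 + (cv4 (nn x (τ x)) 2) ^ 2
        + (cv4 (nn x (τ x)) 3) ^ 2) = 1 := by
      simp only [cv4]; exact_mod_cast congrArg (fun r : ℝ => (r : ℂ)) h
    rw [h2, one_smul]
  have hScancel : ∀ w : Fin 4 → ℂ, S *ᵥ (S *ᵥ w) = w := by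
    intro w; rw [Matrix.mulVec_mulVec, hSS, Matrix.one_mulVec]
  have hτ1 : fderiv ℝ τ x (Pi.single (1 : Fin 4) 1) = -(nn x (τ x) 1) / v x (τ x) := hτk x 0
  have hτ2 : fderiv ℝ τ x (Pi.single (2 : Fin 4) 1) = -(nn x (τ x) 2) / v x (τ x) := hτk x 1
  have hτ3 : fderiv ℝ τ x (Pi.single (3 : Fin 4) 1) = -(nn x (τ x) 3) / v x (τ x) := hτk x 2
  have expand : ∀ μ : Fin 4, fderiv ℝ (fun y => φ (y, τ y)) x (Pi.single μ 1)
      = Dφ (Pi.single μ 1, 0) + ((fderiv ℝ τ x (Pi.single μ 1) : ℝ) : ℂ) • D := by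
    intro μ
    rw [hfd]
    have h2 : ((Pi.single μ 1 : Fin 4 → ℝ), fderiv ℝ τ x (Pi.single μ 1))
        = (Pi.single μ 1, (0:ℝ)) + fderiv ℝ τ x (Pi.single μ 1) • ((0 : Fin 4 → ℝ), (1:ℝ)) := by
      simp [Prod.ext_iff]
    rw [h2, map_add, Dφ.map_smul, rsmul_eq]
  have hsum : (∑ μ, gam μ *ᵥ fderiv ℝ (fun y => φ (y, τ y)) x (Pi.single μ 1))
      = (∑ μ, gam μ *ᵥ fderiv ℝ (fun y => φ (y, τ x)) x (Pi.single μ 1))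
        + (((v x (τ x) : ℝ) : ℂ))⁻¹ • (S *ᵥ D) := by
    have hstep : ∀ μ : Fin 4, gam μ *ᵥ fderiv ℝ (fun y => φ (y, τ y)) x (Pi.single μ 1)
        = gam μ *ᵥ fderiv ℝ (fun y => φ (y, τ x)) x (Pi.single μ 1)
          + ((fderiv ℝ τ x (Pi.single μ 1) : ℝ) : ℂ) • (gam μ *ᵥ D) := by
      intro μ
      rw [expand μ, Matrix.mulVec_add, Matrix.mulVec_smul, hslice]
    simp only [hstep]
    rw [Finset.sum_add_distrib]
    congr 1
    rw [Fin.sum_univ_four, hτ0, hτ1, hτ2, hτ3, hSdef, slash]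
    simp only [cv4, Matrix.sub_mulVec, Matrix.smul_mulVec, smul_sub, smul_smul, gam,
      Matrix.cons_val_zero, Matrix.cons_val_one, Matrix.head_cons, Matrix.cons_val_two,
      Matrix.tail_cons, Matrix.cons_val_three]
    push_cast
    rw [neg_div, neg_div, neg_div, neg_smul, neg_smul, neg_smul,
      div_eq_inv_mul, div_eq_inv_mul, div_eq_inv_mul, div_eq_inv_mul]
    abel
  unfold DiracEqAt
  rw [hsum, smul_add, hfree (τ x) x, add_right_inj, hderiv, rsmul_eq]
  constructor
  · intro h
    have h2 := congrArg (fun w => ((v x (τ x) : ℝ) : ℂ) • (S *ᵥ w)) h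
    simp only [Matrix.mulVec_smul, Matrix.mulVec_mulVec, hSS, Matrix.one_mulVec,
      smul_smul] at h2
    have hc : ((v x (τ x) : ℝ) : ℂ) * (Complex.I * (((v x (τ x) : ℝ) : ℂ))⁻¹) = Complex.I := by
      field_simp
    rw [hc] at h2
    exact h2
  · intro h
    have h2 := congrArg (fun w => (((v x (τ x) : ℝ) : ℂ))⁻¹ • (S *ᵥ w)) h
    simp only [Matrix.mulVec_smul, Matrix.mulVec_mulVec, ← mul_assoc, hSS, one_mul,
      smul_smul] at h2
    rw [inv_mul_cancel₀ hVne, one_smul] at h2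
    rw [smul_smul, mul_comm]
    exact h2
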